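/- Let g : ℝ → ℝ be twice differentiable, let t ∈ ℝ and Δt > 0, and suppose |g''(s)| ≤ M for all s ∈ [t − 2Δt, t + Δt/2]. Then the three-step extrapolation formula used for the convective term satisfies the second-order error bound |g(t + Δt/2) − (g(t) + (1/2)·g(t − Δt) − (1/2)·g(t − 2Δt))| ≤ 2·M·Δt². -/

import Mathlib

private lemma taylor1_deriv (g : ℝ → ℝ) (hg : Differentiable ℝ g)
    (hg' : Differentiable ℝ (deriv g)) (x M : ℝ) (s : ℝ) :
    HasDerivAt (fun s => g x - g s - deriv g s * (x - s) - M / 2 * (x - s) ^ 2)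
      ((M - deriv (deriv g) s) * (x - s)) s := by
  have h1 : HasDerivAt g (deriv g s) s := (hg s).hasDerivAt
  have h2 : HasDerivAt (deriv g) (deriv (deriv g) s) s := (hg' s).hasDerivAt
  have h3 : HasDerivAt (fun s : ℝ => x - s) (-1) s := by
    simpa using (hasDerivAt_id s).const_sub x
  have h4 : HasDerivAt (fun s => deriv g s * (x - s))
      (deriv (deriv g) s * (x - s) + deriv g s * (-1)) s := h2.mul h3
  have h5 : HasDerivAt (fun s : ℝ => (x - s) ^ 2) ((2 : ℕ) * (x - s) ^ 1 * (-1)) s :=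
    h3.pow 2
  have := (((hasDerivAt_const s (g x)).sub h1).sub h4).sub (h5.const_mul (M / 2))
  refine this.congr_deriv ?_
  push_cast
  ring

private lemma taylor1_upper (g : ℝ → ℝ) (hg : Differentiable ℝ g)
    (hg' : Differentiable ℝ (deriv g)) (a x M : ℝ) (hax : a ≤ x)
    (hM : ∀ s ∈ Set.Icc a x, deriv (deriv g) s ≤ M) :
    g x - g a - deriv g a * (x - a) ≤ M * (x - a) ^ 2 / 2 := by
  set φ : ℝ → ℝ := fun s => g x - g s - deriv g s * (x - s) - M / 2 * (x - s) ^ 2 with hφ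
  have hd : ∀ s, HasDerivAt φ ((M - deriv (deriv g) s) * (x - s)) s :=
    taylor1_deriv g hg hg' x M
  have mono : MonotoneOn φ (Set.Icc a x) := by
    apply monotoneOn_of_deriv_nonneg (convex_Icc a x)
    · exact fun s _ => (hd s).continuousAt.continuousWithinAt
    · exact fun s _ => (hd s).differentiableAt.differentiableWithinAt
    · intro s hs
      rw [(hd s).deriv]
      rw [interior_Icc] at hs
      have h1 := hM s ⟨hs.1.le, hs.2.le⟩
      have h2 := hs.2.le
      nlinarith
  have h0 := mono (Set.left_mem_Icc.2 hax) (Set.right_mem_Icc.2 hax) hax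
  simp only [hφ] at h0
  have : g x - g x - deriv g x * (x - x) - M / 2 * (x - x) ^ 2 = 0 := by ring
  rw [this] at h0
  nlinarith

private lemma taylor1_abs (g : ℝ → ℝ) (hg : Differentiable ℝ g)
    (hg' : Differentiable ℝ (deriv g)) (a x M : ℝ) (hax : a ≤ x)
    (hM : ∀ s ∈ Set.Icc a x, |deriv (deriv g) s| ≤ M) :
    |g x - g a - deriv g a * (x - a)| ≤ M * (x - a) ^ 2 / 2 := by
  have hdnegg : deriv (fun s => -g s) = fun s => -deriv g s := by
    funext s; exact deriv.neg
  have hup := taylor1_upper g hg hg' a x M hax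
    (fun s hs => (abs_le.1 (hM s hs)).2)
  have hlow := taylor1_upper (fun s => -g s) hg.neg (by rw [hdnegg]; exact hg'.neg)
    a x M hax ?_
  · rw [abs_le]
    constructor
    · rw [hdnegg] at hlow
      simp only at hlow
      linarith
    · linarith
  · intro s hs
    rw [hdnegg]
    have : deriv (fun s => -deriv g s) s = -deriv (deriv g) s := deriv.neg
    rw [this]
    have := (abs_le.1 (hM s hs)).1
    linarith

private lemma taylor1_step (g : ℝ → ℝ) (hg : Differentiable ℝ g)
    (hg' : Differentiable ℝ (deriv g)) (t h M : ℝ)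
    (hM : ∀ s ∈ Set.uIcc t (t + h), |deriv (deriv g) s| ≤ M) :
    |g (t + h) - g t - deriv g t * h| ≤ M * h ^ 2 / 2 := by
  rcases le_or_gt 0 h with hh | hh
  · have hax : t ≤ t + h := by linarith
    have := taylor1_abs g hg hg' t (t + h) M hax
      (fun s hs => hM s (by rwa [Set.uIcc_of_le hax]))
    simpa using this
  · -- reflect: G s = g (2t - s)
    set G : ℝ → ℝ := fun s => g (2 * t - s) with hG
    have hrefl : ∀ s : ℝ, HasDerivAt (fun s : ℝ => 2 * t - s) (-1) s := fun s => by
      simpa using (hasDerivAt_id s).const_sub (2 * t)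
    have hGd : ∀ s, HasDerivAt G (-deriv g (2 * t - s)) s := fun s => by
      have := ((hg (2 * t - s)).hasDerivAt.comp s (hrefl s)); simp only [mul_neg, mul_one] at this; exact this
    have hGderiv : deriv G = fun s => -deriv g (2 * t - s) := funext fun s => (hGd s).deriv
    have hGd2 : ∀ s, HasDerivAt (fun s => -deriv g (2 * t - s))
        (deriv (deriv g) (2 * t - s)) s := fun s => by
      have := ((hg' (2 * t - s)).hasDerivAt.comp s (hrefl s)).neg
      simp only [mul_neg, mul_one, neg_neg] at this; exact this
    have hGdd : ∀ s, deriv (deriv G) s = deriv (deriv g) (2 * t - s) := fun s => by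
      rw [hGderiv]; exact (hGd2 s).deriv
    have hGdiff : Differentiable ℝ G := fun s => (hGd s).differentiableAt
    have hGdiff' : Differentiable ℝ (deriv G) := by
      rw [hGderiv]; exact fun s => (hGd2 s).differentiableAt
    have hax : t ≤ t + -h := by linarith
    have key := taylor1_abs G hGdiff hGdiff' t (t + -h) M hax ?_
    · have e1 : G (t + -h) = g (t + h) := by simp only [hG]; ring_nf
      have e2 : G t = g t := by simp only [hG]; ring_nf
      have e3 : deriv G t = -deriv g t := by
        rw [hGderiv]; simp only; congr 1; ring
      rw [e1, e2, e3] at key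
      have h5 : -deriv g t * (t + -h - t) = deriv g t * h := by ring
      rw [h5] at key
      have e4 : (t + -h - t) ^ 2 = h ^ 2 := by ring
      rw [e4] at key
      exact key
    · intro s hs
      rw [hGdd]
      apply hM
      rw [Set.uIcc_of_ge (by linarith : t + h ≤ t)]
      obtain ⟨h1, h2⟩ := hs
      constructor <;> [linarith; linarith]

/-- Second-order error bound for the three-step extrapolation of the convective
term at the half time step `t + Δt/2` from values at `t`, `t - Δt`, `t - 2Δt`. -/
theorem three_step_extrapolation_second_order
    (g : ℝ → ℝ) (t Δt M : ℝ)
    (hg : Differentiable ℝ g) (hg' : Differentiable ℝ (deriv g))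
    (hΔt : 0 < Δt)
    (hM : ∀ s ∈ Set.Icc (t - 2 * Δt) (t + Δt / 2), |deriv (deriv g) s| ≤ M) :
    |g (t + Δt / 2) - (g t + (1 / 2) * g (t - Δt) - (1 / 2) * g (t - 2 * Δt))|
      ≤ 2 * M * Δt ^ 2 := by
  have hMnn : 0 ≤ M := le_trans (abs_nonneg _)
    (hM t ⟨by linarith, by linarith⟩)
  have sub : ∀ h : ℝ, t + h ∈ Set.Icc (t - 2 * Δt) (t + Δt / 2) →
      Set.uIcc t (t + h) ⊆ Set.Icc (t - 2 * Δt) (t + Δt / 2) := by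
    intro h hh
    apply Set.uIcc_subset_Icc ⟨by linarith, by linarith⟩ hh
  have R1 := taylor1_step g hg hg' t (Δt / 2) M
    (fun s hs => hM s (sub _ ⟨by linarith, by linarith⟩ hs))
  have R2 := taylor1_step g hg hg' t (-Δt) M
    (fun s hs => hM s (sub _ ⟨by linarith, by linarith⟩ hs))
  have R3 := taylor1_step g hg hg' t (-(2 * Δt)) M
    (fun s hs => hM s (sub _ ⟨by linarith, by linarith⟩ hs))
  have e2 : t + -Δt = t - Δt := by ring
  have e3 : t + -(2 * Δt) = t - 2 * Δt := by ring
  rw [e2] at R2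
  rw [e3] at R3
  have key : g (t + Δt / 2) - (g t + (1 / 2) * g (t - Δt) - (1 / 2) * g (t - 2 * Δt))
      = (g (t + Δt / 2) - g t - deriv g t * (Δt / 2))
        - (1 / 2) * (g (t - Δt) - g t - deriv g t * (-Δt))
        + (1 / 2) * (g (t - 2 * Δt) - g t - deriv g t * (-(2 * Δt))) := by ring
  rw [key]
  calc _ ≤ |g (t + Δt / 2) - g t - deriv g t * (Δt / 2)|
        + |(1 / 2) * (g (t - Δt) - g t - deriv g t * (-Δt))|
        + |(1 / 2) * (g (t - 2 * Δt) - g t - deriv g t * (-(2 * Δt)))| := by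
        refine le_trans (abs_add_le _ _) (add_le_add (le_trans (abs_sub _ _) le_rfl) le_rfl)
    _ ≤ 2 * M * Δt ^ 2 := by
        rw [abs_mul, abs_mul]
        have : |(1 : ℝ) / 2| = 1 / 2 := by norm_num
        rw [this]
        nlinarith [R1, R2, R3, sq_nonneg Δt]
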